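/- Let d = 2, α ∈ (0, 2), and β > 0. Then there exists a constant C = C(α, β) > 0 such that for every integer k ≥ 1 and every real t > 0: Σ_{1 ≤ n ≤ kt} (1/(n k)) Σ_{y∈Z²} ( k/(|y|² + 1) )^{α/2} exp( −β² |y|² / (2n) ) ≤ C t^{1−α/2}. -/

import Mathlib

open scoped BigOperators

set_option maxHeartbeats 1000000
open Real Finset

lemma rpow_telescope {s : ℝ} (hs0 : 0 < s) (hs1 : s < 1) (b : ℝ) (hb : 0 ≤ b) :
    (1-s) * (b+1) ^ (-s) ≤ (b+1)^(1-s) - b^(1-s) := by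
  have ha : (0:ℝ) < b+1 := by linarith
  have hu0 : 0 ≤ b / (b+1) := div_nonneg hb ha.le
  have hgeom := Real.geom_mean_le_arith_mean2_weighted
    (by linarith : (0:ℝ) ≤ 1 - s) hs0.le hu0 zero_le_one (by ring)
  rw [Real.one_rpow, mul_one, mul_one] at hgeom
  have h1 : b ^ (1-s) = (b+1)^(1-s) * (b/(b+1))^(1-s) := by
    rw [← Real.mul_rpow ha.le hu0, mul_div_cancel₀ _ (ne_of_gt ha)]
  have hA : (0:ℝ) ≤ (b+1)^(1-s) := Real.rpow_nonneg ha.le _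
  have hIA : (b+1)^(1-s) * (b+1)⁻¹ = (b+1)^(-s) := by
    rw [← Real.rpow_neg_one (b+1), ← Real.rpow_add ha]
    rw [show (1-s) + (-1) = -s by ring]
  have hba : 1 - b/(b+1) = (b+1)⁻¹ := by field_simp; ring
  calc (1-s) * (b+1)^(-s) = (b+1)^(1-s) * ((1-s)*(1 - b/(b+1))) := by
        rw [hba, ← hIA]; ring
    _ = (b+1)^(1-s) - (b+1)^(1-s) * ((1-s)*(b/(b+1)) + s) := by ring
    _ ≤ (b+1)^(1-s) - (b+1)^(1-s) * (b/(b+1))^(1-s) := by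
        have := mul_le_mul_of_nonneg_left hgeom hA
        linarith
    _ = (b+1)^(1-s) - b^(1-s) := by rw [← h1]

lemma pseries_range {s : ℝ} (hs0 : 0 < s) (hs1 : s < 1) (N : ℕ) :
    ∑ i ∈ Finset.range N, ((i:ℝ)+1) ^ (-s) ≤ (N:ℝ) ^ (1-s) / (1-s) := by
  have h1s : (0:ℝ) < 1 - s := by linarith
  have key : ∀ i : ℕ, ((i:ℝ)+1) ^ (-s)
      ≤ (((i+1:ℕ)):ℝ)^(1-s)/(1-s) - ((i:ℕ):ℝ)^(1-s)/(1-s) := by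
    intro i
    have h := rpow_telescope hs0 hs1 (i:ℝ) (Nat.cast_nonneg i)
    have h3 : ((i+1:ℕ):ℝ) = (i:ℝ)+1 := by push_cast; ring
    rw [h3, div_sub_div_same, le_div_iff₀ h1s, mul_comm]
    exact h
  calc ∑ i ∈ Finset.range N, ((i:ℝ)+1) ^ (-s)
      ≤ ∑ i ∈ Finset.range N, ((((i+1:ℕ)):ℝ)^(1-s)/(1-s) - ((i:ℕ):ℝ)^(1-s)/(1-s)) :=
        Finset.sum_le_sum (fun i _ => key i)
    _ = ((N:ℕ):ℝ)^(1-s)/(1-s) - ((0:ℕ):ℝ)^(1-s)/(1-s) :=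
        Finset.sum_range_sub (fun n : ℕ => ((n:ℕ):ℝ)^(1-s)/(1-s)) N
    _ = (N:ℝ)^(1-s)/(1-s) := by
        rw [Nat.cast_zero, Real.zero_rpow (by linarith)]
        norm_num

lemma pseries_Icc {s : ℝ} (hs0 : 0 < s) (hs1 : s < 1) (N : ℕ) :
    ∑ n ∈ Finset.Icc 1 N, (n:ℝ) ^ (-s) ≤ (N:ℝ) ^ (1-s) / (1-s) := by
  calc ∑ n ∈ Finset.Icc 1 N, (n:ℝ) ^ (-s)
      = ∑ i ∈ Finset.range N, ((i:ℝ)+1) ^ (-s) := by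
        rw [← Finset.Ico_add_one_right_eq_Icc, Finset.sum_Ico_eq_sum_range]
        apply Finset.sum_congr (by norm_num)
        intro i _
        push_cast; ring_nf
    _ ≤ (N:ℝ)^(1-s)/(1-s) := pseries_range hs0 hs1 N
lemma nat_gauss_sum_le {s c₀ : ℝ} (hs0 : 0 < s) (hs1 : s < 1) (hc₀ : 0 < c₀) :
    ∃ C > (0:ℝ), ∀ c : ℝ, 0 < c → c ≤ c₀ →
      Summable (fun n : ℕ => ((n:ℝ)^2+1)^(-(s/2)) * Real.exp (-(c * (n:ℝ)^2))) ∧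
      ∑' n : ℕ, ((n:ℝ)^2+1)^(-(s/2)) * Real.exp (-(c * (n:ℝ)^2))
        ≤ C * c ^ (-((1-s)/2)) := by
  have h1s : (0:ℝ) < 1 - s := by linarith
  set x₀ := Real.sqrt c₀ with hx₀def
  have hx₀ : 0 < x₀ := Real.sqrt_pos.mpr hc₀
  refine ⟨(1+c₀) + (1+x₀)/(1-s) + (1+x₀), by positivity, ?_⟩
  intro c hc hcc₀
  set F : ℕ → ℝ := fun n => ((n:ℝ)^2+1)^(-(s/2)) * Real.exp (-(c * (n:ℝ)^2)) with hFdef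
  have hFnonneg : ∀ n, 0 ≤ F n := fun n =>
    mul_nonneg (Real.rpow_nonneg (by positivity) _) (Real.exp_pos _).le
  -- summability
  have hgeo0 : Real.exp (-c) < 1 := Real.exp_lt_one_iff.mpr (by linarith)
  have hFle : ∀ n : ℕ, F n ≤ (Real.exp (-c))^n := by
    intro n
    show ((n:ℝ)^2+1)^(-(s/2)) * Real.exp (-(c * (n:ℝ)^2)) ≤ (Real.exp (-c))^n
    have h1 : ((n:ℝ)^2+1)^(-(s/2)) ≤ 1 :=
      Real.rpow_le_one_of_one_le_of_nonpos
        (by linarith [sq_nonneg ((n:ℝ))]) (by linarith)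
    have h2 : Real.exp (-(c * (n:ℝ)^2)) ≤ (Real.exp (-c))^n := by
      rw [← Real.exp_nat_mul]
      apply Real.exp_le_exp.mpr
      have hn : (n:ℝ) ≤ (n:ℝ)^2 := by
        exact_mod_cast Nat.le_self_pow two_ne_zero n
      nlinarith [mul_le_mul_of_nonneg_left hn hc.le]
    calc ((n:ℝ)^2+1)^(-(s/2)) * Real.exp (-(c * (n:ℝ)^2))
        ≤ 1 * Real.exp (-(c * (n:ℝ)^2)) :=
          mul_le_mul_of_nonneg_right h1 (Real.exp_pos _).le
      _ = Real.exp (-(c * (n:ℝ)^2)) := one_mul _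
      _ ≤ (Real.exp (-c))^n := h2
  have hF : Summable F :=
    Summable.of_nonneg_of_le hFnonneg hFle
      (summable_geometric_of_lt_one (Real.exp_pos _).le hgeo0)
  refine ⟨hF, ?_⟩
  -- setup M
  set x := Real.sqrt c with hxdef
  have hx : 0 < x := Real.sqrt_pos.mpr hc
  have hxx₀ : x ≤ x₀ := Real.sqrt_le_sqrt hcc₀
  have hc_eq : c = x^2 := (Real.sq_sqrt hc.le).symm
  set M : ℕ := ⌈x⁻¹⌉₊ with hMdef
  have hM0 : 0 < M := Nat.ceil_pos.mpr (inv_pos.mpr hx)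
  have hM1 : (1:ℝ) ≤ M := by exact_mod_cast hM0
  have hMge : x⁻¹ ≤ (M:ℝ) := Nat.le_ceil _
  have hMle : (M:ℝ) ≤ x⁻¹ + 1 := (Nat.ceil_lt_add_one (by positivity)).le
  have hMpos : (0:ℝ) < M := by linarith
  -- split
  have hsplit := (hF.sum_add_tsum_nat_add (M+1)).symm
  -- head bound
  have hhead : ∑ i ∈ Finset.range (M+1), F i ≤ 1 + (M:ℝ)^(1-s)/(1-s) := by
    rw [Finset.sum_range_succ']
    have hF0 : F 0 = 1 := by simp [hFdef]
    rw [hF0]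
    have hterm : ∀ i : ℕ, F (i+1) ≤ ((i:ℝ)+1)^(-s) := by
      intro i
      show (((i+1:ℕ):ℝ)^2+1)^(-(s/2)) * Real.exp (-(c * ((i+1:ℕ):ℝ)^2)) ≤ ((i:ℝ)+1)^(-s)
      have hb : (0:ℝ) < ((i:ℝ)+1)^2 := by positivity
      have h1 : (((i+1:ℕ):ℝ)^2+1)^(-(s/2)) ≤ (((i:ℝ)+1)^2)^(-(s/2)) := by
        apply Real.rpow_le_rpow_of_nonpos hb _ (by linarith)
        push_cast; nlinarith
      have h2 : (((i:ℝ)+1)^2)^(-(s/2)) = ((i:ℝ)+1)^(-s) := by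
        rw [← Real.rpow_natCast ((i:ℝ)+1) 2, ← Real.rpow_mul (by positivity)]
        congr 1
        push_cast; ring
      calc (((i+1:ℕ):ℝ)^2+1)^(-(s/2)) * Real.exp (-(c * ((i+1:ℕ):ℝ)^2))
          ≤ (((i+1:ℕ):ℝ)^2+1)^(-(s/2)) * 1 := by
            apply mul_le_mul_of_nonneg_left _ (Real.rpow_nonneg (by positivity) _)
            exact Real.exp_le_one_iff.mpr (neg_nonpos.mpr (by positivity))
        _ = (((i+1:ℕ):ℝ)^2+1)^(-(s/2)) := mul_one _
        _ ≤ ((i:ℝ)+1)^(-s) := h2 ▸ h1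
    have hp := pseries_range hs0 hs1 M
    have hsum := Finset.sum_le_sum (fun i (_ : i ∈ Finset.range M) => hterm i)
    linarith
  -- tail bound
  set r : ℝ := Real.exp (-(c*M)) with hrdef
  have hr0 : (0:ℝ) ≤ r := (Real.exp_pos _).le
  have hr1 : r < 1 := Real.exp_lt_one_iff.mpr (by nlinarith)
  have htailterm : ∀ n : ℕ, F (n+(M+1)) ≤ (M:ℝ)^(-s) * r^n := by
    intro n
    show (((n+(M+1):ℕ):ℝ)^2+1)^(-(s/2)) * Real.exp (-(c * ((n+(M+1):ℕ):ℝ)^2))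
        ≤ (M:ℝ)^(-s) * r^n
    have hy : (M:ℝ) ≤ ((n+(M+1):ℕ):ℝ) := by
      push_cast; linarith [(Nat.cast_nonneg n : (0:ℝ) ≤ (n:ℝ))]
    have hyn : (n:ℝ) ≤ ((n+(M+1):ℕ):ℝ) := by push_cast; linarith
    have h1 : (((n+(M+1):ℕ):ℝ)^2+1)^(-(s/2)) ≤ (M:ℝ)^(-s) := by
      have hMsq : (0:ℝ) < (M:ℝ)^2 := by positivity
      have hle : ((M:ℝ))^2 ≤ ((n+(M+1):ℕ):ℝ)^2+1 := by nlinarith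
      calc (((n+(M+1):ℕ):ℝ)^2+1)^(-(s/2)) ≤ ((M:ℝ)^2)^(-(s/2)) :=
            Real.rpow_le_rpow_of_nonpos hMsq hle (by linarith)
        _ = (M:ℝ)^(-s) := by
            rw [← Real.rpow_natCast (M:ℝ) 2, ← Real.rpow_mul hMpos.le]
            congr 1
            push_cast; ring
    have h2 : Real.exp (-(c * ((n+(M+1):ℕ):ℝ)^2)) ≤ r^n := by
      rw [hrdef, ← Real.exp_nat_mul]
      apply Real.exp_le_exp.mpr
      have hMn : (M:ℝ) * (n:ℝ) ≤ ((n+(M+1):ℕ):ℝ)^2 := by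
        have h5 := mul_le_mul hy hyn (Nat.cast_nonneg n) (le_trans hMpos.le hy)
        nlinarith
      have hq := mul_le_mul_of_nonneg_left hMn hc.le
      nlinarith [hq]
    calc (((n+(M+1):ℕ):ℝ)^2+1)^(-(s/2)) * Real.exp (-(c * ((n+(M+1):ℕ):ℝ)^2))
        ≤ (M:ℝ)^(-s) * Real.exp (-(c * ((n+(M+1):ℕ):ℝ)^2)) :=
          mul_le_mul_of_nonneg_right h1 (Real.exp_pos _).le
      _ ≤ (M:ℝ)^(-s) * r^n :=
          mul_le_mul_of_nonneg_left h2 (Real.rpow_nonneg hMpos.le _)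
  have htailsum : Summable (fun n : ℕ => F (n+(M+1))) := (summable_nat_add_iff (M+1)).mpr hF
  have hgeosum : Summable (fun n : ℕ => (M:ℝ)^(-s) * r^n) :=
    (summable_geometric_of_lt_one hr0 hr1).mul_left _
  have htail : ∑' n : ℕ, F (n+(M+1)) ≤ (M:ℝ)^(-s) * (1-r)⁻¹ := by
    calc ∑' n : ℕ, F (n+(M+1)) ≤ ∑' n : ℕ, (M:ℝ)^(-s) * r^n :=
          Summable.tsum_le_tsum htailterm htailsum hgeosum
      _ = (M:ℝ)^(-s) * (1-r)⁻¹ := by rw [tsum_mul_left, tsum_geometric_of_lt_one hr0 hr1]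
  -- bound (1-r)⁻¹ ≤ (1+x₀)/x
  have hrx : r ≤ Real.exp (-x) := by
    apply Real.exp_le_exp.mpr
    have hxc : x ≤ c * M := by
      have : x = c * x⁻¹ := by rw [hc_eq]; field_simp
      rw [this]
      exact mul_le_mul_of_nonneg_left hMge hc.le
    linarith
  have hex : Real.exp (-x) ≤ (x+1)⁻¹ := by
    rw [Real.exp_neg]
    apply inv_anti₀ (by linarith)
    linarith [Real.add_one_le_exp x]
  have hinv : (1-r)⁻¹ ≤ (1+x₀)/x := by
    have h1 : x/(x+1) ≤ 1 - r := by
      have hrr : r ≤ (x+1)⁻¹ := hrx.trans hex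
      have h2 : x/(x+1) = 1 - (x+1)⁻¹ := by field_simp; ring
      linarith
    have h3 : (0:ℝ) < x/(x+1) := by positivity
    calc (1-r)⁻¹ ≤ (x/(x+1))⁻¹ := inv_anti₀ h3 h1
      _ = (x+1)/x := by rw [inv_div]
      _ ≤ (1+x₀)/x := by
          have h7 := mul_le_mul_of_nonneg_right (show x+1 ≤ 1+x₀ by linarith)
            (inv_nonneg.mpr hx.le)
          simpa [div_eq_mul_inv] using h7
  -- final assembly
  have hA0 : (0:ℝ) < x^(s-1) := Real.rpow_pos_of_pos hx _
  have hX : x^(s-1) = c ^ (-((1-s)/2)) := by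
    rw [hxdef, Real.sqrt_eq_rpow, ← Real.rpow_mul hc.le]
    congr 1; ring
  have hx₀le : x₀ ≤ 1 + c₀ := by
    have h1 : c₀ ≤ (1+c₀)^2 := by nlinarith
    calc x₀ = Real.sqrt c₀ := hx₀def
      _ ≤ Real.sqrt ((1+c₀)^2) := Real.sqrt_le_sqrt h1
      _ = 1 + c₀ := Real.sqrt_sq (by positivity)
  have ha : (1:ℝ) ≤ (1+c₀) * x^(s-1) := by
    have hxp : x^(1-s) ≤ 1 + c₀ := by
      rcases le_or_gt x 1 with h | h
      · calc x^(1-s) ≤ 1 := Real.rpow_le_one hx.le h h1s.le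
          _ ≤ 1 + c₀ := by linarith
      · calc x^(1-s) ≤ x^(1:ℝ) := Real.rpow_le_rpow_of_exponent_le h.le (by linarith)
          _ = x := Real.rpow_one x
          _ ≤ x₀ := hxx₀
          _ ≤ 1 + c₀ := hx₀le
    have hone : x^(1-s) * x^(s-1) = 1 := by
      rw [← Real.rpow_add hx]
      norm_num
    calc (1:ℝ) = x^(1-s) * x^(s-1) := hone.symm
      _ ≤ (1+c₀) * x^(s-1) := mul_le_mul_of_nonneg_right hxp hA0.le
  have hb : (M:ℝ)^(1-s) ≤ (1+x₀) * x^(s-1) := by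
    have h1 : (M:ℝ) ≤ x⁻¹ * (1+x₀) := by
      have h2 : (1:ℝ) ≤ x⁻¹ * x₀ := by
        rw [show (1:ℝ) = x⁻¹ * x by rw [inv_mul_cancel₀ hx.ne']]
        exact mul_le_mul_of_nonneg_left hxx₀ (by positivity)
      have h3 : x⁻¹ * (1+x₀) = x⁻¹ + x⁻¹ * x₀ := by ring
      linarith
    have h4 : (x⁻¹)^(1-s) = x^(s-1) := by
      rw [Real.inv_rpow hx.le, ← Real.rpow_neg hx.le]
      congr 1; ring
    have h5 : (1+x₀)^(1-s) ≤ 1+x₀ := by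
      calc (1+x₀)^(1-s) ≤ (1+x₀)^(1:ℝ) :=
            Real.rpow_le_rpow_of_exponent_le (by linarith) (by linarith)
        _ = 1+x₀ := Real.rpow_one _
    calc (M:ℝ)^(1-s) ≤ (x⁻¹ * (1+x₀))^(1-s) :=
          Real.rpow_le_rpow hMpos.le h1 h1s.le
      _ = (x⁻¹)^(1-s) * (1+x₀)^(1-s) := Real.mul_rpow (by positivity) (by positivity)
      _ = x^(s-1) * (1+x₀)^(1-s) := by rw [h4]
      _ ≤ x^(s-1) * (1+x₀) := mul_le_mul_of_nonneg_left h5 hA0.le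
      _ = (1+x₀) * x^(s-1) := by ring
  have hc1 : (M:ℝ)^(-s) * (1-r)⁻¹ ≤ (1+x₀) * x^(s-1) := by
    have hMs : (M:ℝ)^(-s) ≤ x^s := by
      have := Real.rpow_le_rpow_of_nonpos (inv_pos.mpr hx) hMge (neg_nonpos.mpr hs0.le)
      rwa [Real.inv_rpow hx.le, Real.rpow_neg hx.le, inv_inv] at this
    have h6 : x^s * ((1+x₀)/x) = (1+x₀) * x^(s-1) := by
      rw [show x^(s-1) = x^s / x by rw [Real.rpow_sub hx, Real.rpow_one]]
      field_simp
    calc (M:ℝ)^(-s) * (1-r)⁻¹ ≤ x^s * ((1+x₀)/x) := by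
          apply mul_le_mul hMs hinv (inv_nonneg.mpr (by linarith)) (Real.rpow_nonneg hx.le _)
      _ = (1+x₀) * x^(s-1) := h6
  have hbd : (M:ℝ)^(1-s)/(1-s) ≤ ((1+x₀) * x^(s-1))/(1-s) := by gcongr
  calc ∑' n : ℕ, F n
      = (∑ i ∈ Finset.range (M+1), F i) + ∑' n : ℕ, F (n+(M+1)) := hsplit
    _ ≤ (1 + (M:ℝ)^(1-s)/(1-s)) + (M:ℝ)^(-s)*(1-r)⁻¹ := add_le_add hhead htail
    _ ≤ (1+c₀)*x^(s-1) + ((1+x₀)*x^(s-1))/(1-s) + (1+x₀)*x^(s-1) := by linarith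
    _ = ((1+c₀) + (1+x₀)/(1-s) + (1+x₀)) * x^(s-1) := by ring
    _ = ((1+c₀) + (1+x₀)/(1-s) + (1+x₀)) * c ^ (-((1-s)/2)) := by rw [hX]

lemma int_gauss_sum_le {s c₀ : ℝ} (hs0 : 0 < s) (hs1 : s < 1) (hc₀ : 0 < c₀) :
    ∃ C > (0:ℝ), ∀ c : ℝ, 0 < c → c ≤ c₀ →
      Summable (fun m : ℤ => ((m:ℝ)^2+1)^(-(s/2)) * Real.exp (-(c * (m:ℝ)^2))) ∧
      ∑' m : ℤ, ((m:ℝ)^2+1)^(-(s/2)) * Real.exp (-(c * (m:ℝ)^2))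
        ≤ C * c ^ (-((1-s)/2)) := by
  obtain ⟨C, hC, h⟩ := nat_gauss_sum_le hs0 hs1 hc₀
  refine ⟨2*C, by linarith, ?_⟩
  intro c hc hcc₀
  obtain ⟨hF, hFs⟩ := h c hc hcc₀
  set F : ℕ → ℝ := fun n => ((n:ℝ)^2+1)^(-(s/2)) * Real.exp (-(c * (n:ℝ)^2)) with hFdef
  have hFnonneg : ∀ n, 0 ≤ F n := fun n =>
    mul_nonneg (Real.rpow_nonneg (by positivity) _) (Real.exp_pos _).le
  have hF1 : Summable (fun n : ℕ => F (n+1)) := (summable_nat_add_iff 1).mpr hF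
  have hrec : (fun m : ℤ => ((m:ℝ)^2+1)^(-(s/2)) * Real.exp (-(c * (m:ℝ)^2)))
      = (Int.rec (fun n : ℕ => F n) (fun n : ℕ => F (n+1)) : ℤ → ℝ) := by
    funext m
    cases m with
    | ofNat n => simp [hFdef]
    | negSucc n =>
        show ((((Int.negSucc n):ℤ):ℝ)^2+1)^(-(s/2))
            * Real.exp (-(c * (((Int.negSucc n):ℤ):ℝ)^2)) = F (n+1)
        rw [Int.cast_negSucc, hFdef]
        push_cast
        ring_nf
  have hZsum : Summable (Int.rec (fun n:ℕ => F n) (fun n:ℕ => F (n+1)) : ℤ → ℝ) :=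
    Summable.int_rec hF hF1
  rw [hrec]
  refine ⟨hZsum, ?_⟩
  rw [tsum_int_rec hF hF1]
  have h0 : ∑' n : ℕ, F (n+1) ≤ ∑' n : ℕ, F n := by
    have h1 := hF.tsum_eq_zero_add
    have h2 := hFnonneg 0
    linarith
  calc (∑' n : ℕ, F n) + ∑' n : ℕ, F (n+1) ≤ 2 * ∑' n : ℕ, F n := by linarith
    _ ≤ 2 * (C * c ^ (-((1-s)/2))) := by linarith
    _ = 2 * C * c ^ (-((1-s)/2)) := by ring

lemma pi_gauss_sum_le {s c₀ : ℝ} (hs0 : 0 < s) (hs1 : s < 1) (hc₀ : 0 < c₀) :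
    ∃ C > (0:ℝ), ∀ c : ℝ, 0 < c → c ≤ c₀ → ∀ K : ℝ, 0 ≤ K →
      (∑' y : Fin 2 → ℤ, (K / ((∑ i, ((y i : ℝ))^2) + 1)) ^ s *
          Real.exp (-(c * (∑ i, ((y i : ℝ))^2))))
        ≤ C * (K ^ s * c ^ (-(1-s))) := by
  obtain ⟨C₁, hC₁, h⟩ := int_gauss_sum_le hs0 hs1 hc₀
  refine ⟨C₁^2, by positivity, ?_⟩
  intro c hc hcc₀ K hK
  obtain ⟨hg, hgs⟩ := h c hc hcc₀
  set g : ℤ → ℝ := fun m => ((m:ℝ)^2+1)^(-(s/2)) * Real.exp (-(c * (m:ℝ)^2)) with hgdef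
  have hgnn : ∀ m, 0 ≤ g m := fun m =>
    mul_nonneg (Real.rpow_nonneg (by positivity) _) (Real.exp_pos _).le
  have hgS : (0:ℝ) ≤ ∑' m : ℤ, g m := tsum_nonneg hgnn
  have hprod : Summable (fun p : ℤ × ℤ => g p.1 * g p.2) :=
    hg.mul_of_nonneg hg hgnn hgnn
  have hDsum : Summable (fun y : Fin 2 → ℤ => g (y 0) * g (y 1)) := by
    have := (Equiv.summable_iff (piFinTwoEquiv (fun _ => ℤ))).mpr hprod
    exact this
  -- pointwise bound
  have claim : ∀ y : Fin 2 → ℤ,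
      (K / ((∑ i, ((y i : ℝ))^2) + 1)) ^ s * Real.exp (-(c * (∑ i, ((y i : ℝ))^2)))
        ≤ K ^ s * (g (y 0) * g (y 1)) := by
    intro y
    rw [Fin.sum_univ_two]
    set a := ((y 0 : ℤ):ℝ) with hadef
    set b := ((y 1 : ℤ):ℝ) with hbdef
    have hX : (0:ℝ) < a^2 + b^2 + 1 := by positivity
    have hsplit1 : (K / (a^2+b^2+1)) ^ s = K^s * (a^2+b^2+1)^(-s) := by
      rw [Real.div_rpow hK hX.le, Real.rpow_neg hX.le, div_eq_mul_inv]
    have hsplit2 : Real.exp (-(c * (a^2+b^2)))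
        = Real.exp (-(c*a^2)) * Real.exp (-(c*b^2)) := by
      rw [← Real.exp_add]
      congr 1; ring
    have hmid : (a^2+b^2+1)^(-s) ≤ (a^2+1)^(-(s/2)) * (b^2+1)^(-(s/2)) := by
      have hpos : (0:ℝ) < (a^2+1)*(b^2+1) := by positivity
      have hle : (a^2+1)*(b^2+1) ≤ (a^2+b^2+1)^2 := by nlinarith [sq_nonneg (a*b), sq_nonneg a, sq_nonneg b]
      have h1 : (a^2+b^2+1)^(-s) = ((a^2+b^2+1)^(2:ℕ))^(-(s/2)) := by
        rw [← Real.rpow_natCast (a^2+b^2+1) 2, ← Real.rpow_mul hX.le]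
        congr 1; push_cast; ring
      rw [h1]
      calc ((a^2+b^2+1)^(2:ℕ))^(-(s/2)) ≤ ((a^2+1)*(b^2+1))^(-(s/2)) := by
            apply Real.rpow_le_rpow_of_nonpos hpos _ (by linarith)
            rw [← Real.rpow_natCast (a^2+b^2+1) 2] at hle ⊢
            exact_mod_cast hle
        _ = (a^2+1)^(-(s/2)) * (b^2+1)^(-(s/2)) :=
            Real.mul_rpow (by positivity) (by positivity)
    calc (K / (a^2+b^2+1)) ^ s * Real.exp (-(c * (a^2+b^2)))
        = K^s * ((a^2+b^2+1)^(-s) * (Real.exp (-(c*a^2)) * Real.exp (-(c*b^2)))) := by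
          rw [hsplit1, hsplit2]; ring
      _ ≤ K^s * (((a^2+1)^(-(s/2)) * (b^2+1)^(-(s/2))) * (Real.exp (-(c*a^2)) * Real.exp (-(c*b^2)))) := by
          apply mul_le_mul_of_nonneg_left _ (Real.rpow_nonneg hK _)
          apply mul_le_mul_of_nonneg_right hmid (by positivity)
      _ = K^s * (g (y 0) * g (y 1)) := by
          rw [hgdef]; ring
  have horignn : ∀ y : Fin 2 → ℤ,
      0 ≤ (K / ((∑ i, ((y i : ℝ))^2) + 1)) ^ s * Real.exp (-(c * (∑ i, ((y i : ℝ))^2))) := by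
    intro y
    have : (0:ℝ) ≤ K / ((∑ i, ((y i : ℝ))^2) + 1) := by positivity
    exact mul_nonneg (Real.rpow_nonneg this _) (Real.exp_pos _).le
  have hdomsum : Summable (fun y : Fin 2 → ℤ => K^s * (g (y 0) * g (y 1))) :=
    hDsum.mul_left _
  have horig : Summable (fun y : Fin 2 → ℤ =>
      (K / ((∑ i, ((y i : ℝ))^2) + 1)) ^ s * Real.exp (-(c * (∑ i, ((y i : ℝ))^2)))) :=
    Summable.of_nonneg_of_le horignn claim hdomsum
  have hnorm : Summable (fun m : ℤ => ‖g m‖) :=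
    hg.congr (fun m => (Real.norm_of_nonneg (hgnn m)).symm)
  have htsum_eq : ∑' y : Fin 2 → ℤ, g (y 0) * g (y 1) = (∑' m : ℤ, g m) * ∑' m : ℤ, g m := by
    have h1 := Equiv.tsum_eq (piFinTwoEquiv (fun _ => ℤ)) (fun p : ℤ × ℤ => g p.1 * g p.2)
    have h2 := tsum_mul_tsum_of_summable_norm hnorm hnorm
    exact h1.trans h2.symm
  calc (∑' y : Fin 2 → ℤ, (K / ((∑ i, ((y i : ℝ))^2) + 1)) ^ s *
          Real.exp (-(c * (∑ i, ((y i : ℝ))^2))))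
      ≤ ∑' y : Fin 2 → ℤ, K^s * (g (y 0) * g (y 1)) :=
        Summable.tsum_le_tsum claim horig hdomsum
    _ = K^s * ((∑' m : ℤ, g m) * ∑' m : ℤ, g m) := by rw [tsum_mul_left, htsum_eq]
    _ ≤ K^s * ((C₁ * c ^ (-((1-s)/2))) * (C₁ * c ^ (-((1-s)/2)))) := by
        apply mul_le_mul_of_nonneg_left _ (Real.rpow_nonneg hK _)
        exact mul_le_mul hgs hgs hgS (le_trans hgS hgs)
    _ = C₁^2 * (K^s * (c ^ (-((1-s)/2)) * c ^ (-((1-s)/2)))) := by ring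
    _ = C₁^2 * (K ^ s * c ^ (-(1-s))) := by
        rw [← Real.rpow_add hc]
        congr 3
        ring

open scoped BigOperators

/-- two-dimensional Gaussian-sum estimate:
`Σ_{1≤n≤kt} (1/(nk)) Σ_{y∈ℤ²} (k/(|y|²+1))^{α/2} exp(−β²|y|²/(2n)) ≤ C t^{1−α/2}`. -/
theorem gauss_spike_sum_le (α β : ℝ) (hα0 : 0 < α) (hα : α < 2) (hβ : 0 < β) :
    ∃ C > (0 : ℝ), ∀ k : ℕ, 1 ≤ k → ∀ t : ℝ, 0 < t →
      (∑ n ∈ Finset.Icc 1 ⌊(k : ℝ) * t⌋₊, (1 / ((n : ℝ) * k)) *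
        ∑' y : Fin 2 → ℤ,
          ((k : ℝ) / ((∑ i, ((y i : ℝ)) ^ 2) + 1)) ^ (α / 2) *
            Real.exp (-β ^ 2 * (∑ i, ((y i : ℝ)) ^ 2) / (2 * n)))
        ≤ C * t ^ (1 - α / 2) := by
  set s := α / 2 with hsdef
  have hs0 : 0 < s := by rw [hsdef]; linarith
  have hs1 : s < 1 := by rw [hsdef]; linarith
  have h1s : (0:ℝ) < 1 - s := by linarith
  have hc₀ : (0:ℝ) < β^2/2 := by positivity
  obtain ⟨C₂, hC₂, hpi⟩ := pi_gauss_sum_le hs0 hs1 hc₀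
  set D := C₂ * (2/β^2) ^ (1-s) with hDdef
  have hD : 0 < D := by
    apply mul_pos hC₂ (Real.rpow_pos_of_pos (by positivity) _)
  refine ⟨D/(1-s), div_pos hD h1s, ?_⟩
  intro k hk t ht
  set N := ⌊(k:ℝ)*t⌋₊ with hNdef
  have hk1 : (1:ℝ) ≤ (k:ℝ) := by exact_mod_cast hk
  have hk0 : (0:ℝ) < (k:ℝ) := by linarith
  have hterm : ∀ n ∈ Finset.Icc 1 N, (1 / ((n : ℝ) * k)) *
      (∑' y : Fin 2 → ℤ,
        ((k : ℝ) / ((∑ i, ((y i : ℝ)) ^ 2) + 1)) ^ s *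
          Real.exp (-β ^ 2 * (∑ i, ((y i : ℝ)) ^ 2) / (2 * n)))
      ≤ D * (k:ℝ)^(s-1) * (n:ℝ)^(-s) := by
    intro n hn
    rw [Finset.mem_Icc] at hn
    have hnR : (1:ℝ) ≤ (n:ℝ) := by exact_mod_cast hn.1
    have hnpos : (0:ℝ) < (n:ℝ) := by linarith
    have hc : (0:ℝ) < β^2/(2*(n:ℝ)) := by positivity
    have hcc₀ : β^2/(2*(n:ℝ)) ≤ β^2/2 :=
      div_le_div_of_nonneg_left (by positivity) (by norm_num) (by linarith)
    have hexp : ∀ y : Fin 2 → ℤ,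
        ((k : ℝ) / ((∑ i, ((y i : ℝ)) ^ 2) + 1)) ^ s *
          Real.exp (-β ^ 2 * (∑ i, ((y i : ℝ)) ^ 2) / (2 * n))
        = ((k : ℝ) / ((∑ i, ((y i : ℝ)) ^ 2) + 1)) ^ s *
          Real.exp (-((β^2/(2*(n:ℝ))) * (∑ i, ((y i : ℝ)) ^ 2))) := by
      intro y
      congr 1
      congr 1
      field_simp
    have hinner : (∑' y : Fin 2 → ℤ,
        ((k : ℝ) / ((∑ i, ((y i : ℝ)) ^ 2) + 1)) ^ s *
          Real.exp (-β ^ 2 * (∑ i, ((y i : ℝ)) ^ 2) / (2 * n)))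
        ≤ C₂ * ((k:ℝ)^s * (β^2/(2*(n:ℝ))) ^ (-(1-s))) := by
      rw [tsum_congr hexp]
      exact hpi _ hc hcc₀ (k:ℝ) hk0.le
    have hcpow : (β^2/(2*(n:ℝ))) ^ (-(1-s)) = (2/β^2)^(1-s) * (n:ℝ)^(1-s) := by
      have h1 : (β^2/(2*(n:ℝ)))⁻¹ = (2/β^2) * (n:ℝ) := by
        field_simp
      rw [Real.rpow_neg hc.le, ← Real.inv_rpow hc.le, h1,
        Real.mul_rpow (by positivity) hnpos.le]
    have hkpow : (k:ℝ)^s * (k:ℝ)⁻¹ = (k:ℝ)^(s-1) := by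
      rw [← Real.rpow_neg_one (k:ℝ), ← Real.rpow_add hk0]
      congr 1 <;> ring
    have hnpow : (n:ℝ)^(1-s) * (n:ℝ)⁻¹ = (n:ℝ)^(-s) := by
      rw [← Real.rpow_neg_one (n:ℝ), ← Real.rpow_add hnpos]
      congr 1 <;> ring
    calc (1 / ((n : ℝ) * k)) *
        (∑' y : Fin 2 → ℤ,
          ((k : ℝ) / ((∑ i, ((y i : ℝ)) ^ 2) + 1)) ^ s *
            Real.exp (-β ^ 2 * (∑ i, ((y i : ℝ)) ^ 2) / (2 * n)))
        ≤ (1 / ((n : ℝ) * k)) * (C₂ * ((k:ℝ)^s * (β^2/(2*(n:ℝ))) ^ (-(1-s)))) :=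
          mul_le_mul_of_nonneg_left hinner (by positivity)
      _ = (1 / ((n : ℝ) * k)) * (C₂ * ((k:ℝ)^s * ((2/β^2)^(1-s) * (n:ℝ)^(1-s)))) := by
          rw [hcpow]
      _ = D * ((k:ℝ)^s * (k:ℝ)⁻¹) * ((n:ℝ)^(1-s) * (n:ℝ)⁻¹) := by
          rw [hDdef]
          field_simp
      _ = D * (k:ℝ)^(s-1) * (n:ℝ)^(-s) := by rw [hkpow, hnpow]
  have hNle : ((N:ℕ):ℝ) ≤ (k:ℝ)*t := Nat.floor_le (by positivity)
  calc (∑ n ∈ Finset.Icc 1 N, (1 / ((n : ℝ) * k)) *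
        ∑' y : Fin 2 → ℤ,
          ((k : ℝ) / ((∑ i, ((y i : ℝ)) ^ 2) + 1)) ^ s *
            Real.exp (-β ^ 2 * (∑ i, ((y i : ℝ)) ^ 2) / (2 * n)))
      ≤ ∑ n ∈ Finset.Icc 1 N, D * (k:ℝ)^(s-1) * (n:ℝ)^(-s) :=
        Finset.sum_le_sum hterm
    _ = D * (k:ℝ)^(s-1) * ∑ n ∈ Finset.Icc 1 N, (n:ℝ)^(-s) := by
        rw [Finset.mul_sum]
    _ ≤ D * (k:ℝ)^(s-1) * ((N:ℝ)^(1-s)/(1-s)) := by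
        apply mul_le_mul_of_nonneg_left (pseries_Icc hs0 hs1 N)
        exact mul_nonneg hD.le (Real.rpow_nonneg hk0.le _)
    _ ≤ D * (k:ℝ)^(s-1) * (((k:ℝ)*t)^(1-s)/(1-s)) := by
        have hpow : ((N:ℕ):ℝ)^(1-s) ≤ ((k:ℝ)*t)^(1-s) :=
          Real.rpow_le_rpow (Nat.cast_nonneg N) hNle h1s.le
        have h2 : ((N:ℕ):ℝ)^(1-s)/(1-s) ≤ ((k:ℝ)*t)^(1-s)/(1-s) := by gcongr
        exact mul_le_mul_of_nonneg_left h2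
          (mul_nonneg hD.le (Real.rpow_nonneg hk0.le _))
    _ = (D/(1-s)) * (((k:ℝ)^(s-1) * (k:ℝ)^(1-s)) * t^(1-s)) := by
        rw [Real.mul_rpow hk0.le ht.le]
        ring
    _ = (D/(1-s)) * t^(1-s) := by
        rw [← Real.rpow_add hk0]
        norm_num
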